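/- Suppose (x_n) is a sequence of nonzero reals satisfying x_{n+10} = x_n / (A + B·x_n·x_{n+2}·x_{n+4}·x_{n+6}·x_{n+8}) with all denominators nonzero. Define F_n = 1/(x_n·x_{n+2}·x_{n+4}·x_{n+6}·x_{n+8}). Then F_{n+2} = A·F_n + B for all n. -/

import Mathlib

theorem stmt2 (A B : ℝ) (x : ℕ → ℝ)
    (hx : ∀ n, x n ≠ 0)
    (hden : ∀ n, A + B * (x n * x (n+2) * x (n+4) * x (n+6) * x (n+8)) ≠ 0)
    (hrec : ∀ n, x (n + 10) =
      x n / (A + B * (x n * x (n+2) * x (n+4) * x (n+6) * x (n+8))))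
    (F : ℕ → ℝ)
    (hF : ∀ n, F n = 1 / (x n * x (n+2) * x (n+4) * x (n+6) * x (n+8))) :
    ∀ n, F (n + 2) = A * F n + B := by
  intro n
  have h10 : n + 2 + 8 = n + 10 := by ring
  rw [hF, hF, show n+2+2 = n+4 from rfl, show n+2+4 = n+6 from rfl,
    show n+2+6 = n+8 from rfl, h10, hrec n]
  have hP : x n * x (n+2) * x (n+4) * x (n+6) * x (n+8) ≠ 0 :=
    mul_ne_zero (mul_ne_zero (mul_ne_zero (mul_ne_zero (hx n) (hx (n+2))) (hx (n+4))) (hx (n+6))) (hx (n+8))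
  have hc : x (n+2) * x (n+4) * x (n+6) * x (n+8) *
      (x n / (A + B * (x n * x (n+2) * x (n+4) * x (n+6) * x (n+8)))) =
      (x n * x (n+2) * x (n+4) * x (n+6) * x (n+8)) /
      (A + B * (x n * x (n+2) * x (n+4) * x (n+6) * x (n+8))) := by ring
  rw [hc, one_div_div]
  field_simp [hP]
  rw [div_add' _ _ _ hP]
  ring
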